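/- Product preservation implies tabletop reversibility: if U(γ⊗ξ)U† = γ'⊗ξ' with γ, ξ, γ', ξ' density matrices and γ, γ' full rank, where γ' = N(γ) for the channel N(ρ) = Tr_E(U(ρ⊗ξ)U†), then the Petz recovery map N̂_γ(X) = γ^{1/2} N†(γ'^{-1/2} X γ'^{-1/2}) γ^{1/2} equals the tabletop reverse map N̂^T(X) = Tr_E(U†(X⊗ξ')U). -/

import Mathlib

open scoped ComplexOrder
open Matrix BigOperators Kronecker

noncomputable def ptraceE {dS dE : ℕ} (M : Matrix (Fin dS × Fin dE) (Fin dS × Fin dE) ℂ) :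
    Matrix (Fin dS) (Fin dS) ℂ :=
  Matrix.of fun i j => ∑ k, M (i, k) (j, k)

lemma kron_conjT {dS dE : ℕ} (A : Matrix (Fin dS) (Fin dS) ℂ) (B : Matrix (Fin dE) (Fin dE) ℂ) :
    (A ⊗ₖ B)ᴴ = Aᴴ ⊗ₖ Bᴴ := by
  ext ⟨i, k⟩ ⟨j, l⟩
  simp [conjTranspose_apply, kroneckerMap_apply, mul_comm]

lemma kron_posSemidef {dS dE : ℕ} {A : Matrix (Fin dS) (Fin dS) ℂ} {B : Matrix (Fin dE) (Fin dE) ℂ}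
    (hA : A.PosSemidef) (hB : B.PosSemidef) : (A ⊗ₖ B).PosSemidef := by
  obtain ⟨C, hC⟩ : ∃ C, A = Cᴴ * C := by
    open scoped MatrixOrder in exact CStarAlgebra.nonneg_iff_eq_star_mul_self.mp hA.nonneg
  obtain ⟨D, hD⟩ : ∃ D, B = Dᴴ * D := by
    open scoped MatrixOrder in exact CStarAlgebra.nonneg_iff_eq_star_mul_self.mp hB.nonneg
  have : A ⊗ₖ B = (C ⊗ₖ D)ᴴ * (C ⊗ₖ D) := by
    rw [kron_conjT, ← Matrix.mul_kronecker_mul, ← hC, ← hD]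
  rw [this]
  exact Matrix.posSemidef_conjTranspose_mul_self _

lemma ptraceE_conjT {dS dE : ℕ} (M : Matrix (Fin dS × Fin dE) (Fin dS × Fin dE) ℂ) :
    ptraceE Mᴴ = (ptraceE M)ᴴ := by
  ext i j
  simp [ptraceE, conjTranspose_apply]

lemma trace_mul_ptraceE {dS dE : ℕ} (A : Matrix (Fin dS) (Fin dS) ℂ)
    (M : Matrix (Fin dS × Fin dE) (Fin dS × Fin dE) ℂ) :
    (A * ptraceE M).trace = ((A ⊗ₖ (1 : Matrix (Fin dE) (Fin dE) ℂ)) * M).trace := by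
  simp only [Matrix.trace, Matrix.diag, Matrix.mul_apply, ptraceE, Matrix.of_apply,
    kroneckerMap_apply, Matrix.one_apply, ite_mul, mul_ite, mul_zero, zero_mul, one_mul, mul_one]
  rw [Fintype.sum_prod_type]
  refine Finset.sum_congr rfl fun i _ => ?_
  simp only [Fintype.sum_prod_type]
  rw [Finset.sum_comm]
  refine Finset.sum_congr rfl fun k _ => ?_
  simp [Finset.mul_sum, Finset.sum_ite_eq, Finset.sum_ite_eq']

lemma eq_of_forall_trace {dS : ℕ} {M₁ M₂ : Matrix (Fin dS) (Fin dS) ℂ}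
    (h : ∀ Y : Matrix (Fin dS) (Fin dS) ℂ, (Yᴴ * M₁).trace = (Yᴴ * M₂).trace) : M₁ = M₂ := by
  ext i j
  have := h (Matrix.single i j 1)
  simp only [Matrix.trace, Matrix.diag, Matrix.mul_apply, Matrix.single,
    conjTranspose_apply, Matrix.of_apply, apply_ite (star : ℂ → ℂ), star_one, star_zero, ite_mul,
    one_mul, zero_mul, ite_and] at this
  simpa [Finset.sum_ite_eq, Finset.sum_ite_eq'] using this

lemma trace_sandwich {n : Type*} [Fintype n] (P M Sm : Matrix n n ℂ) :
    (P * (Sm * M * Sm)).trace = ((Sm * P * Sm) * M).trace := by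
  calc (P * (Sm * M * Sm)).trace = ((P * Sm) * M * Sm).trace := by simp only [Matrix.mul_assoc]
    _ = (Sm * (P * Sm) * M).trace := Matrix.trace_mul_cycle (P * Sm) M Sm
    _ = ((Sm * P * Sm) * M).trace := by simp only [Matrix.mul_assoc]

lemma trace_conj_comm {n : Type*} [Fintype n] (P M U : Matrix n n ℂ) :
    (P * (U * M * Uᴴ)).trace = ((Uᴴ * P * U) * M).trace := by
  calc (P * (U * M * Uᴴ)).trace = ((P * U) * M * Uᴴ).trace := by simp only [Matrix.mul_assoc]
    _ = (Uᴴ * (P * U) * M).trace := Matrix.trace_mul_cycle (P * U) M Uᴴ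
    _ = ((Uᴴ * P * U) * M).trace := by simp only [Matrix.mul_assoc]

set_option maxHeartbeats 2000000 in
theorem product_preservation_implies_TTR {dS dE : ℕ}
    (U : Matrix (Fin dS × Fin dE) (Fin dS × Fin dE) ℂ)
    (hU : U ∈ Matrix.unitaryGroup (Fin dS × Fin dE) ℂ)
    (γ γ' : Matrix (Fin dS) (Fin dS) ℂ) (ξ ξ' : Matrix (Fin dE) (Fin dE) ℂ)
    (hγ : γ.PosDef) (hγtr : γ.trace = 1)
    (hξ : ξ.PosDef) (hξtr : ξ.trace = 1)
    (hγ'def : γ' = ptraceE (U * (γ ⊗ₖ ξ) * Uᴴ))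
    (hγ' : γ'.PosDef)
    (hξ' : ξ'.PosSemidef) (hξ'tr : ξ'.trace = 1)
    (hprod : U * (γ ⊗ₖ ξ) * Uᴴ = γ' ⊗ₖ ξ')
    (Nadj : Matrix (Fin dS) (Fin dS) ℂ → Matrix (Fin dS) (Fin dS) ℂ)
    (hadj : ∀ X Y, (Xᴴ * ptraceE (U * (Y ⊗ₖ ξ) * Uᴴ)).trace = ((Nadj X)ᴴ * Y).trace)
    (sγ r : Matrix (Fin dS) (Fin dS) ℂ)
    (hsγ : sγ.PosDef) (hsγsq : sγ * sγ = γ)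
    (hr : r.PosDef) (hrsq : r * r = γ') :
    ∀ X : Matrix (Fin dS) (Fin dS) ℂ,
      sγ * Nadj (r⁻¹ * X * r⁻¹) * sγ = ptraceE (Uᴴ * (X ⊗ₖ ξ') * U) := by
  classical
  have hUc : Uᴴ * U = 1 := by
    have := hU.1
    rwa [Matrix.star_eq_conjTranspose] at this
  have hUc' : U * Uᴴ = 1 := by
    have := hU.2
    rwa [Matrix.star_eq_conjTranspose] at this
  have hrdet : IsUnit r.det := (Matrix.isUnit_iff_isUnit_det r).mp hr.isUnit
  have hrinv : r * r⁻¹ = 1 := Matrix.mul_nonsing_inv r hrdet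
  have hrinv' : r⁻¹ * r = 1 := Matrix.nonsing_inv_mul r hrdet
  obtain ⟨sξ, hsξpsd, hsξsq⟩ :
      ∃ sξ : Matrix (Fin dE) (Fin dE) ℂ, sξ.PosSemidef ∧ sξ * sξ = ξ :=
    open scoped MatrixOrder in
    ⟨CFC.sqrt ξ, (CFC.sqrt_nonneg ξ).posSemidef, CFC.sqrt_mul_sqrt_self ξ hξ.posSemidef.nonneg⟩
  obtain ⟨sξ', hsξ'psd, hsξ'sq⟩ :
      ∃ s : Matrix (Fin dE) (Fin dE) ℂ, s.PosSemidef ∧ s * s = ξ' :=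
    open scoped MatrixOrder in
    ⟨CFC.sqrt ξ', (CFC.sqrt_nonneg ξ').posSemidef, CFC.sqrt_mul_sqrt_self ξ' hξ'.nonneg⟩
  obtain ⟨S, hSdef⟩ : ∃ S, S = sγ ⊗ₖ sξ := ⟨_, rfl⟩
  have hSpsd : S.PosSemidef := hSdef ▸ kron_posSemidef hsγ.posSemidef hsξpsd
  have hS2 : S * S = γ ⊗ₖ ξ := by
    rw [hSdef, ← Matrix.mul_kronecker_mul, hsγsq, hsξsq]
  -- key identity: U √(γ⊗ξ) Uᴴ = √(γ'⊗ξ')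
  have key : U * S * Uᴴ = r ⊗ₖ sξ' := by
    open scoped MatrixOrder in
    refine (CFC.sq_eq_sq_iff _ _ (hSpsd.mul_mul_conjTranspose_same U).nonneg
      (kron_posSemidef hr.posSemidef hsξ'psd).nonneg).mp ?_
    rw [pow_two, pow_two, ← Matrix.mul_kronecker_mul, hrsq, hsξ'sq]
    calc (U * S * Uᴴ) * (U * S * Uᴴ) = U * (S * ((Uᴴ * U) * (S * Uᴴ))) := by
          simp only [Matrix.mul_assoc]
      _ = U * (S * S) * Uᴴ := by rw [hUc, one_mul]; simp only [Matrix.mul_assoc]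
      _ = γ' ⊗ₖ ξ' := by rw [hS2, hprod]
  intro X
  obtain ⟨Z, hZdef⟩ : ∃ Z, Z = r⁻¹ * X * r⁻¹ := ⟨_, rfl⟩
  rw [← hZdef]
  have hXZ : r * Z * r = X := by
    rw [hZdef]
    calc r * (r⁻¹ * X * r⁻¹) * r = (r * r⁻¹) * X * (r⁻¹ * r) := by
          simp only [Matrix.mul_assoc]
      _ = X := by rw [hrinv, hrinv', one_mul, mul_one]
  apply eq_of_forall_trace
  intro Y
  have hsγH : sγᴴ = sγ := hsγ.isHermitian
  have hξH : ξᴴ = ξ := hξ.isHermitian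
  obtain ⟨A, hAdef⟩ : ∃ A, A = sγ * Yᴴ * sγ := ⟨_, rfl⟩
  obtain ⟨W, hWdef⟩ : ∃ W, W = sγ * Y * sγ := ⟨_, rfl⟩
  have hWH : Wᴴ = A := by
    rw [hWdef, hAdef, conjTranspose_mul, conjTranspose_mul, hsγH, Matrix.mul_assoc]
  -- Step 1: move the sγ's onto Y
  have step1 : (Yᴴ * (sγ * Nadj Z * sγ)).trace = (Wᴴ * Nadj Z).trace := by
    rw [hWH, hAdef]
    calc (Yᴴ * (sγ * Nadj Z * sγ)).trace = ((Yᴴ * sγ) * Nadj Z * sγ).trace := by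
          simp only [Matrix.mul_assoc]
      _ = (sγ * (Yᴴ * sγ) * Nadj Z).trace := Matrix.trace_mul_cycle (Yᴴ * sγ) (Nadj Z) sγ
      _ = (sγ * Yᴴ * sγ * Nadj Z).trace := by simp only [Matrix.mul_assoc]
  -- Step 2: use the adjoint property (via conjugation of traces)
  have step2 : (Wᴴ * Nadj Z).trace = ((ptraceE (U * (W ⊗ₖ ξ) * Uᴴ))ᴴ * Z).trace := by
    calc (Wᴴ * Nadj Z).trace = ((Nadj Z)ᴴ * W)ᴴ.trace := by
          rw [conjTranspose_mul, conjTranspose_conjTranspose]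
      _ = star (((Nadj Z)ᴴ * W).trace) := Matrix.trace_conjTranspose _
      _ = star ((Zᴴ * ptraceE (U * (W ⊗ₖ ξ) * Uᴴ)).trace) := by rw [hadj Z W]
      _ = ((Zᴴ * ptraceE (U * (W ⊗ₖ ξ) * Uᴴ))ᴴ).trace := (Matrix.trace_conjTranspose _).symm
      _ = ((ptraceE (U * (W ⊗ₖ ξ) * Uᴴ))ᴴ * Z).trace := by
          rw [conjTranspose_mul, conjTranspose_conjTranspose]
  -- Step 3: the conjTranspose of the partial trace
  have step3 : (ptraceE (U * (W ⊗ₖ ξ) * Uᴴ))ᴴ = ptraceE (U * (A ⊗ₖ ξ) * Uᴴ) := by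
    rw [← ptraceE_conjT]
    congr 1
    rw [conjTranspose_mul, conjTranspose_mul, conjTranspose_conjTranspose, kron_conjT, hWH, hξH]
    simp only [Matrix.mul_assoc]
  -- Step 4: rewrite X ⊗ ξ' using the key identity
  have step4 : Uᴴ * (X ⊗ₖ ξ') * U
      = S * (Uᴴ * (Z ⊗ₖ (1 : Matrix (Fin dE) (Fin dE) ℂ)) * U) * S := by
    have hXkron : X ⊗ₖ ξ'
        = (r ⊗ₖ sξ') * (Z ⊗ₖ (1 : Matrix (Fin dE) (Fin dE) ℂ)) * (r ⊗ₖ sξ') := by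
      rw [← Matrix.mul_kronecker_mul, ← Matrix.mul_kronecker_mul, hXZ, mul_one, hsξ'sq]
    rw [hXkron, ← key]
    calc Uᴴ * ((U * S * Uᴴ) * (Z ⊗ₖ 1) * (U * S * Uᴴ)) * U
        = Uᴴ * (U * (S * (Uᴴ * ((Z ⊗ₖ 1) * (U * (S * (Uᴴ * U))))))) := by
          simp only [Matrix.mul_assoc]
      _ = Uᴴ * (U * (S * (Uᴴ * ((Z ⊗ₖ 1) * (U * S))))) := by rw [hUc, mul_one]
      _ = (Uᴴ * U) * (S * (Uᴴ * ((Z ⊗ₖ 1) * (U * S)))) := by rw [Matrix.mul_assoc]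
      _ = S * (Uᴴ * (Z ⊗ₖ 1) * U) * S := by rw [hUc, one_mul]; simp only [Matrix.mul_assoc]
  -- Now assemble the trace computation
  rw [step1, step2, step3, step4]
  obtain ⟨Q, hQdef⟩ : ∃ Q, Q = Uᴴ * (Z ⊗ₖ (1 : Matrix (Fin dE) (Fin dE) ℂ)) * U := ⟨_, rfl⟩
  rw [← hQdef]
  have hSAS : S * (Yᴴ ⊗ₖ (1 : Matrix (Fin dE) (Fin dE) ℂ)) * S = A ⊗ₖ ξ := by
    rw [hSdef, ← Matrix.mul_kronecker_mul, ← Matrix.mul_kronecker_mul, mul_one, hsξsq, ← hAdef]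
  have L1 : (ptraceE (U * (A ⊗ₖ ξ) * Uᴴ) * Z).trace = ((A ⊗ₖ ξ) * Q).trace := by
    rw [Matrix.trace_mul_comm, trace_mul_ptraceE, trace_conj_comm, Matrix.trace_mul_comm,
      ← hQdef]
  have L2 : (Yᴴ * ptraceE (S * Q * S)).trace = ((A ⊗ₖ ξ) * Q).trace := by
    rw [trace_mul_ptraceE, trace_sandwich, hSAS]
  rw [L1, L2]
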